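/- Let X be a finite set, S a family of subsets of X, and d a positive integer. Define S' to be the family of all unions of d pairwise-disjoint sets from S. Then X has an exact cover from S' if and only if X has an exact cover from S whose size is a multiple of d. -/

import Mathlib

private lemma pairwise_add_iff' {α : Type*} {r : α → α → Prop} (hr : Symmetric r)
    (s t : Multiset α) :
    (s + t).Pairwise r ↔ s.Pairwise r ∧ t.Pairwise r ∧ ∀ a ∈ s, ∀ b ∈ t, r a b := by
  refine Quotient.inductionOn₂ s t fun l l' => ?_
  simp only [Multiset.quot_mk_to_coe]
  haveI : Std.Symm r := ⟨fun _ _ h => hr h⟩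
  rw [Multiset.coe_add, Multiset.pairwise_coe_iff_pairwise,
    Multiset.pairwise_coe_iff_pairwise, Multiset.pairwise_coe_iff_pairwise,
    List.pairwise_append]
  simp

private lemma pairwise_cons_iff' {α : Type*} {r : α → α → Prop} (hr : Symmetric r)
    (a : α) (t : Multiset α) :
    (a ::ₘ t).Pairwise r ↔ t.Pairwise r ∧ ∀ b ∈ t, r a b := by
  rw [← Multiset.singleton_add, pairwise_add_iff' hr]
  simp only [Multiset.mem_singleton, forall_eq]
  constructor
  · rintro ⟨-, h1, h2⟩; exact ⟨h1, h2⟩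
  · rintro ⟨h1, h2⟩; exact ⟨⟨[a], rfl, List.pairwise_singleton r a⟩, h1, h2⟩

private lemma pairwise_zero' {α : Type*} {r : α → α → Prop} : (0 : Multiset α).Pairwise r :=
  ⟨[], rfl, List.Pairwise.nil⟩

private lemma msup_disjoint_left {α : Type*} [DecidableEq α]
    (s : Multiset (Finset α)) (x : Finset α) :
    Disjoint s.sup x ↔ ∀ a ∈ s, Disjoint a x := by
  induction s using Multiset.induction_on with
  | empty => simp
  | cons a s ih => simp [Multiset.sup_cons, disjoint_sup_left, ih]

private lemma exists_split' {α : Type*} (n : ℕ) :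
    ∀ C : Multiset α, n ≤ Multiset.card C → ∃ D E, C = D + E ∧ Multiset.card D = n := by
  induction n with
  | zero => exact fun C _ => ⟨0, C, by simp, rfl⟩
  | succ n ih =>
    intro C hC
    have hne : C ≠ 0 := by rintro rfl; simp at hC
    obtain ⟨a, ha⟩ := Multiset.exists_mem_of_ne_zero hne
    obtain ⟨C', rfl⟩ := Multiset.exists_cons_of_mem ha
    obtain ⟨D, E, rfl, hD⟩ := ih C' (by simpa using hC)
    exact ⟨a ::ₘ D, E, by simp [Multiset.cons_add], by simp [hD]⟩

theorem stmt_13 {α : Type*} [DecidableEq α] (X : Finset α) (S : Set (Finset α))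
    (d : ℕ) (hd : 0 < d) :
    (∃ C : Multiset (Finset α),
        (∀ B ∈ C, ∃ D : Multiset (Finset α), (∀ A ∈ D, A ∈ S) ∧
          Multiset.card D = d ∧ D.Pairwise Disjoint ∧ D.sup = B) ∧
        C.Pairwise Disjoint ∧ C.sup = X) ↔
    (∃ C : Multiset (Finset α), (∀ A ∈ C, A ∈ S) ∧ C.Pairwise Disjoint ∧
        C.sup = X ∧ d ∣ Multiset.card C) := by
  have hsym : Symmetric (Disjoint : Finset α → Finset α → Prop) := fun _ _ h => h.symm
  constructor
  · rintro ⟨C, hmem, hpw, hsup⟩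
    subst hsup
    clear hd
    induction C using Multiset.induction_on with
    | empty => exact ⟨0, by simp, pairwise_zero', by simp, ⟨0, by simp⟩⟩
    | cons B C ih =>
      rw [pairwise_cons_iff' hsym] at hpw
      obtain ⟨E, hE1, hE2, hE3, hE4⟩ := ih (fun B' hB' => hmem B' (Multiset.mem_cons_of_mem hB')) hpw.1
      obtain ⟨D, hD1, hD2, hD3, hD4⟩ := hmem B (Multiset.mem_cons_self B C)
      refine ⟨D + E, ?_, ?_, ?_, ?_⟩
      · intro A hA; rcases Multiset.mem_add.1 hA with h | h
        exacts [hD1 A h, hE1 A h]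
      · rw [pairwise_add_iff' hsym]
        refine ⟨hD3, hE2, fun a ha b hb => ?_⟩
        have haB : a ≤ B := hD4 ▸ Multiset.le_sup ha
        have hbC : b ≤ C.sup := hE3 ▸ Multiset.le_sup hb
        have : Disjoint B C.sup := (msup_disjoint_left C B).2
          (fun c hc => (hpw.2 c hc).symm) |>.symm
        exact (this.mono haB hbC)
      · rw [Multiset.sup_add, hD4, hE3, Multiset.sup_cons]
      · obtain ⟨k, hk⟩ := hE4
        exact ⟨k + 1, by simp [hk, hD2, Multiset.sup_cons, mul_add, mul_comm, add_comm]⟩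
  · rintro ⟨C, hmem, hpw, hsup, k, hk⟩
    subst hsup
    induction k generalizing C with
    | zero =>
      have : C = 0 := by
        rw [← Multiset.card_eq_zero]; omega
      subst this
      exact ⟨0, by simp, pairwise_zero', by simp⟩
    | succ k ih =>
      have hk' : Multiset.card C = d * k + d := by rw [hk, Nat.mul_succ]
      obtain ⟨D, E, rfl, hDcard⟩ := exists_split' d C (by omega)
      rw [pairwise_add_iff' hsym] at hpw
      have hEcard : Multiset.card E = d * k := by
        have h2 := Multiset.card_add D E
        omega
      obtain ⟨C', hC1, hC2, hC3⟩ := ih E (fun A hA => hmem A (Multiset.mem_add.2 (Or.inr hA)))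
        hpw.2.1 hEcard
      refine ⟨D.sup ::ₘ C', ?_, ?_, ?_⟩
      · intro B hB
        rcases Multiset.mem_cons.1 hB with rfl | h
        · exact ⟨D, fun A hA => hmem A (Multiset.mem_add.2 (Or.inl hA)), hDcard, hpw.1, rfl⟩
        · exact hC1 B h
      · rw [pairwise_cons_iff' hsym]
        refine ⟨hC2, fun b hb => ?_⟩
        have hbE : b ≤ E.sup := hC3 ▸ Multiset.le_sup hb
        have hDE : Disjoint D.sup E.sup := (msup_disjoint_left D E.sup).2
          (fun a ha => ((msup_disjoint_left E a).2 fun e he => (hpw.2.2 a ha e he).symm).symm)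
        exact hDE.mono_right hbE
      · rw [Multiset.sup_cons, hC3, Multiset.sup_add]
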